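/- Let $\mathcal{C}$ be an abelian category with enough injectives and $X$ an exact, locally nilpotent endofunctor preserving injectives. If in the construction of $\operatorname{Mo}\mathsf{M}$ the chosen monomorphism $j\colon \ker h_{\mathsf{M}} \to J$ is an injective envelope, then the resulting map $p_{\mathsf{M}}\colon \operatorname{Mimo}\mathsf{M} \to \mathsf{M}$ is a minimal right $\operatorname{Mono}(X)$-approximation, i.e. a right approximation that is right minimal (any endomorphism $\varphi$ of $\operatorname{Mimo}\mathsf{M}$ with $p_{\mathsf{M}} \circ \varphi = p_{\mathsf{M}}$ is an isomorphism). -/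

import Mathlib

open CategoryTheory Limits

universe v u

variable {C : Type u} [Category.{v} C]

/-- The power `X^n` of an endofunctor, with `X^(n+1) = X^n ⋙ X`. -/
def fpow (X : C ⥤ C) : ℕ → (C ⥤ C)
  | 0 => 𝟭 C
  | n + 1 => fpow X n ⋙ X

/-- `X` is locally nilpotent if every object is annihilated by some power of `X`. -/
def LocallyNilpotent (X : C ⥤ C) : Prop :=
  ∀ M : C, ∃ n : ℕ, IsZero ((fpow X n).obj M)

/-- The category `(X ⇓ Id)` of `X`-modules, identified with the Eilenberg–Moore category
of the free monad on `X`. -/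
structure XMod (X : C ⥤ C) : Type max u v where
  carrier : C
  str : X.obj carrier ⟶ carrier

/-- Morphisms of `X`-modules. -/
@[ext]
structure XModHom {X : C ⥤ C} (M N : XMod X) : Type v where
  hom : M.carrier ⟶ N.carrier
  comm : M.str ≫ hom = X.map hom ≫ N.str

instance (X : C ⥤ C) : Category (XMod X) where
  Hom := XModHom
  id M := ⟨𝟙 M.carrier, by simp⟩
  comp f g := ⟨f.hom ≫ g.hom, by
    rw [← Category.assoc, f.comm, Category.assoc, g.comm, ← Category.assoc, ← Functor.map_comp]⟩
  id_comp f := by apply XModHom.ext; simp [CategoryStruct.id, CategoryStruct.comp]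
  comp_id f := by apply XModHom.ext; simp [CategoryStruct.id, CategoryStruct.comp]
  assoc f g h := by apply XModHom.ext; simp [CategoryStruct.comp]

@[simp] lemma XMod.id_hom {X : C ⥤ C} (M : XMod X) : (𝟙 M : XModHom M M).hom = 𝟙 M.carrier := rfl
@[simp] lemma XMod.comp_hom {X : C ⥤ C} {M N P : XMod X} (f : M ⟶ N) (g : N ⟶ P) :
    (f ≫ g).hom = f.hom ≫ g.hom := rfl

/-- `F` is the free `X`-module `f₁(N)` on `N`, encoded via the universal
property of the free–forgetful adjunction `f₁ ⊣ f⋆`. -/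
structure IsFreeXModOn (X : C ⥤ C) (F : XMod X) (N : C) where
  unit : N ⟶ F.carrier
  lift : ∀ (P : XMod X), (N ⟶ P.carrier) → (F ⟶ P)
  fac : ∀ (P : XMod X) (g : N ⟶ P.carrier), unit ≫ (lift P g).hom = g
  uniq : ∀ (P : XMod X) (g : N ⟶ P.carrier) (k : F ⟶ P), unit ≫ k.hom = g → k = lift P g

variable [Abelian C] {X : C ⥤ C} [X.Additive]

instance {M N : XMod X} : Zero (XModHom M N) := ⟨⟨0, by simp⟩⟩
instance {M N : XMod X} : Add (XModHom M N) :=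
  ⟨fun f g => ⟨f.hom + g.hom, by
    simp [Preadditive.comp_add, Preadditive.add_comp, f.comm, g.comm]⟩⟩
instance {M N : XMod X} : Neg (XModHom M N) :=
  ⟨fun f => ⟨-f.hom, by simp [Preadditive.comp_neg, Preadditive.neg_comp, f.comm]⟩⟩

instance {M N : XMod X} : AddCommGroup (XModHom M N) where
  add_assoc f g h := by apply XModHom.ext; exact add_assoc _ _ _
  zero_add f := by apply XModHom.ext; exact zero_add _
  add_zero f := by apply XModHom.ext; exact add_zero _
  add_comm f g := by apply XModHom.ext; exact add_comm _ _
  neg_add_cancel f := by apply XModHom.ext; exact neg_add_cancel _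
  nsmul := nsmulRec
  zsmul := zsmulRec

instance : Preadditive (XMod X) where
  homGroup M N := inferInstanceAs (AddCommGroup (XModHom M N))
  add_comp M N P f g h := by apply XModHom.ext; exact Preadditive.add_comp _ _ _ _ _ _
  comp_add M N P f g h := by apply XModHom.ext; exact Preadditive.comp_add _ _ _ _ _ _

@[simp] lemma XMod.zero_hom (M N : XMod X) : (0 : M ⟶ N).hom = 0 := rfl
@[simp] lemma XMod.add_hom {M N : XMod X} (f g : M ⟶ N) : (f + g).hom = f.hom + g.hom := rfl

set_option linter.unusedSectionVars false

/-! ### Auxiliary material -/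

section MimoAux

@[simp] lemma XModHom.mk_hom {M N : XMod X} (f : M.carrier ⟶ N.carrier) (h) :
    (XModHom.mk f h : XModHom M N).hom = f := rfl

@[simp] lemma XMod.neg_hom {M N : XMod X} (f : M ⟶ N) : (-f).hom = -f.hom := rfl

@[simp] lemma XMod.sub_hom {M N : XMod X} (f g : M ⟶ N) : (f - g).hom = f.hom - g.hom := by
  rw [sub_eq_add_neg, sub_eq_add_neg, XMod.add_hom, XMod.neg_hom]

lemma XMod.isIso_hom {M N : XMod X} (f : M ⟶ N) [IsIso f] : IsIso f.hom :=
  ⟨(inv f).hom,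
    by rw [← XMod.comp_hom, IsIso.hom_inv_id, XMod.id_hom],
    by rw [← XMod.comp_hom, IsIso.inv_hom_id, XMod.id_hom]⟩

lemma XMod.isIso_of_hom {M N : XMod X} (f : M ⟶ N) (h : IsIso f.hom) : IsIso f := by
  letI := h
  haveI : IsIso (X.map f.hom) := inferInstance
  have hcomm : N.str ≫ inv f.hom = X.map (inv f.hom) ≫ M.str := by
    apply (cancel_epi (X.map f.hom)).1
    rw [← Category.assoc, ← f.comm, Category.assoc, IsIso.hom_inv_id, Category.comp_id,
      ← Category.assoc, ← X.map_comp, IsIso.hom_inv_id, X.map_id, Category.id_comp]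
  exact ⟨⟨inv f.hom, hcomm⟩, XModHom.ext (by simp), XModHom.ext (by simp)⟩

lemma isZero_X_obj {T : C} (h : IsZero T) : IsZero (X.obj T) := X.map_isZero h

theorem injective_fpow (hXinj : ∀ I : C, Injective I → Injective (X.obj I)) {J : C}
    (hJ : Injective J) : ∀ n : ℕ, Injective ((fpow X n).obj J)
  | 0 => hJ
  | n + 1 => hXinj _ (injective_fpow hXinj hJ n)

lemma IsFreeXModOn.hom_ext {F : XMod X} {N : C} (hF : IsFreeXModOn X F N) {P : XMod X}
    {k l : F ⟶ P} (h : hF.unit ≫ k.hom = hF.unit ≫ l.hom) : k = l :=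
  (hF.uniq P _ k rfl).trans (hF.uniq P _ l h.symm).symm

/-- The canonical biproduct decomposition of a free module:
there are projections `pN`, `pX` exhibiting `F ≅ N ⊞ X F`. -/
lemma IsFreeXModOn.splitting {F : XMod X} {N : C} (hF : IsFreeXModOn X F N) :
    ∃ (pN : F.carrier ⟶ N) (pX : F.carrier ⟶ X.obj F.carrier),
      hF.unit ≫ pN = 𝟙 N ∧ hF.unit ≫ pX = 0 ∧ F.str ≫ pN = 0 ∧
      F.str ≫ pX = 𝟙 (X.obj F.carrier) ∧ pN ≫ hF.unit + pX ≫ F.str = 𝟙 F.carrier := by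
  let ζ : N ⊞ X.obj F.carrier ⟶ F.carrier := biprod.desc hF.unit F.str
  have hζl : biprod.inl ≫ ζ = hF.unit := biprod.inl_desc _ _
  have hζr : biprod.inr ≫ ζ = F.str := biprod.inr_desc _ _
  let W : XMod X := ⟨N ⊞ X.obj F.carrier, X.map ζ ≫ biprod.inr⟩
  have hζcomm : W.str ≫ ζ = X.map ζ ≫ F.str := by
    show (X.map ζ ≫ biprod.inr) ≫ ζ = X.map ζ ≫ F.str
    rw [Category.assoc, hζr]
  let ζm : W ⟶ F := ⟨ζ, hζcomm⟩
  let ξ : F ⟶ W := hF.lift W biprod.inl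
  have hfacξ : hF.unit ≫ ξ.hom = biprod.inl := hF.fac W biprod.inl
  have hξζ : ξ ≫ ζm = 𝟙 F := by
    apply hF.hom_ext
    rw [XMod.comp_hom, XMod.id_hom, Category.comp_id, ← Category.assoc, hfacξ]
    exact hζl
  have hξζhom : ξ.hom ≫ ζ = 𝟙 F.carrier := by
    have := congrArg XModHom.hom hξζ
    rwa [XMod.comp_hom, XMod.id_hom] at this
  have hstrξ : F.str ≫ ξ.hom = biprod.inr := by
    rw [ξ.comm]
    show X.map ξ.hom ≫ (X.map ζ ≫ biprod.inr) = biprod.inr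
    rw [← Category.assoc, ← X.map_comp, hξζhom, X.map_id, Category.id_comp]
  refine ⟨ξ.hom ≫ biprod.fst, ξ.hom ≫ biprod.snd, ?_, ?_, ?_, ?_, ?_⟩
  · rw [← Category.assoc, hfacξ, biprod.inl_fst]
  · rw [← Category.assoc, hfacξ, biprod.inl_snd]
  · rw [← Category.assoc, hstrξ, biprod.inr_fst]
  · rw [← Category.assoc, hstrξ, biprod.inr_snd]
  · have : (ξ.hom ≫ biprod.fst) ≫ hF.unit + (ξ.hom ≫ biprod.snd) ≫ F.str
        = ξ.hom ≫ ((biprod.fst ≫ biprod.inl + biprod.snd ≫ biprod.inr) ≫ ζ) := by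
      rw [Preadditive.add_comp, Preadditive.comp_add, Category.assoc, Category.assoc,
        Category.assoc, Category.assoc, hζl, hζr]
    rw [this, biprod.total, Category.id_comp, hξζhom]

/-- Joint epicness of `X.map inl`, `X.map inr` out of `X.obj (A ⊞ B)`. -/
lemma Xbiprod_hom_ext {A B Z : C} (f g : X.obj (A ⊞ B) ⟶ Z)
    (h1 : X.map biprod.inl ≫ f = X.map biprod.inl ≫ g)
    (h2 : X.map biprod.inr ≫ f = X.map biprod.inr ≫ g) : f = g := by
  have htot : X.map biprod.fst ≫ X.map biprod.inl + X.map biprod.snd ≫ X.map biprod.inr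
      = 𝟙 (X.obj (A ⊞ B)) := by
    rw [← X.map_comp, ← X.map_comp, ← X.map_add, biprod.total, X.map_id]
  calc f = (X.map biprod.fst ≫ X.map biprod.inl + X.map biprod.snd ≫ X.map biprod.inr) ≫ f := by
          rw [htot, Category.id_comp]
    _ = (X.map biprod.fst ≫ X.map biprod.inl + X.map biprod.snd ≫ X.map biprod.inr) ≫ g := by
          rw [Preadditive.add_comp, Preadditive.add_comp, Category.assoc, Category.assoc,
            Category.assoc, Category.assoc, h1, h2]
    _ = g := by rw [htot, Category.id_comp]

end MimoAux

section MimoAux2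

/-- Iterated extension along the mono `strN` into powers of the injective `J`. -/
noncomputable def gammaSeq {A J : C} (strN : X.obj A ⟶ A) [Mono strN] (hJ : Injective J)
    (hXinj : ∀ I : C, Injective I → Injective (X.obj I)) (c₀ : X.obj A ⟶ J) :
    ∀ i : ℕ, (A ⟶ (fpow X i).obj J)
  | 0 => letI := hJ; (Injective.factorThru c₀ strN : A ⟶ J)
  | i + 1 => letI : Injective (X.obj ((fpow X i).obj J)) := injective_fpow hXinj hJ (i + 1)
      (Injective.factorThru (X.map (gammaSeq strN hJ hXinj c₀ i)) strN :
        A ⟶ X.obj ((fpow X i).obj J))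

lemma gammaSeq_zero {A J : C} (strN : X.obj A ⟶ A) [Mono strN] (hJ : Injective J)
    (hXinj : ∀ I : C, Injective I → Injective (X.obj I)) (c₀ : X.obj A ⟶ J) :
    strN ≫ gammaSeq strN hJ hXinj c₀ 0 = c₀ := by
  letI := hJ
  show strN ≫ (Injective.factorThru c₀ strN : A ⟶ J) = c₀
  exact Injective.comp_factorThru c₀ strN

lemma gammaSeq_succ {A J : C} (strN : X.obj A ⟶ A) [Mono strN] (hJ : Injective J)
    (hXinj : ∀ I : C, Injective I → Injective (X.obj I)) (c₀ : X.obj A ⟶ J) (i : ℕ) :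
    strN ≫ gammaSeq strN hJ hXinj c₀ (i + 1) = X.map (gammaSeq strN hJ hXinj c₀ i) := by
  letI : Injective (X.obj ((fpow X i).obj J)) := injective_fpow hXinj hJ (i + 1)
  show strN ≫ (Injective.factorThru (X.map (gammaSeq strN hJ hXinj c₀ i)) strN :
      A ⟶ X.obj ((fpow X i).obj J)) = _
  exact Injective.comp_factorThru _ strN

/-- The inclusion of the `i`-th layer `X^i J` into (the carrier of) the free module. -/
def insSeq {J B : C} (uJ : J ⟶ B) (strJ : X.obj B ⟶ B) : ∀ i : ℕ, ((fpow X i).obj J ⟶ B)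
  | 0 => uJ
  | i + 1 => X.map (insSeq uJ strJ i) ≫ strJ

/-- Partial sums of the solution of the twisted equation. -/
noncomputable def GSeq {A J B : C} (strN : X.obj A ⟶ A) [Mono strN] (hJ : Injective J)
    (hXinj : ∀ I : C, Injective I → Injective (X.obj I)) (c₀ : X.obj A ⟶ J)
    (uJ : J ⟶ B) (strJ : X.obj B ⟶ B) : ℕ → (A ⟶ B)
  | 0 => 0
  | k + 1 => GSeq strN hJ hXinj c₀ uJ strJ k
      + gammaSeq strN hJ hXinj c₀ k ≫ insSeq uJ strJ k

lemma GSeq_eq {A J B : C} (strN : X.obj A ⟶ A) [Mono strN] (hJ : Injective J)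
    (hXinj : ∀ I : C, Injective I → Injective (X.obj I)) (c₀ : X.obj A ⟶ J)
    (uJ : J ⟶ B) (strJ : X.obj B ⟶ B) :
    ∀ k : ℕ, strN ≫ GSeq strN hJ hXinj c₀ uJ strJ (k + 1)
      = c₀ ≫ uJ + X.map (GSeq strN hJ hXinj c₀ uJ strJ k) ≫ strJ
  | 0 => by
    show strN ≫ (0 + gammaSeq strN hJ hXinj c₀ 0 ≫ insSeq uJ strJ 0)
      = c₀ ≫ uJ + X.map (0 : A ⟶ B) ≫ strJ
    rw [zero_add, X.map_zero, zero_comp, add_zero, ← Category.assoc,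
      gammaSeq_zero strN hJ hXinj c₀]
    rfl
  | k + 1 => by
    have IH := GSeq_eq strN hJ hXinj c₀ uJ strJ k
    show strN ≫ (GSeq strN hJ hXinj c₀ uJ strJ (k + 1)
        + gammaSeq strN hJ hXinj c₀ (k + 1) ≫ insSeq uJ strJ (k + 1))
      = c₀ ≫ uJ + X.map (GSeq strN hJ hXinj c₀ uJ strJ k
        + gammaSeq strN hJ hXinj c₀ k ≫ insSeq uJ strJ k) ≫ strJ
    rw [Preadditive.comp_add, IH, ← Category.assoc, gammaSeq_succ strN hJ hXinj c₀ k,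
      X.map_add, Preadditive.add_comp, X.map_comp, Category.assoc, add_assoc]
    rfl

/-- Powers of an endomorphism. -/
def pwSeq {D : Type*} [Category D] {E : D} (q : E ⟶ E) : ℕ → (E ⟶ E)
  | 0 => 𝟙 E
  | k + 1 => q ≫ pwSeq q k

/-- Partial geometric series. -/
def geoSeq {D : Type*} [Category D] [Preadditive D] {E : D} (q : E ⟶ E) : ℕ → (E ⟶ E)
  | 0 => 0
  | k + 1 => 𝟙 E + q ≫ geoSeq q k

lemma geoSeq_left {D : Type*} [Category D] [Preadditive D] {E : D} (q : E ⟶ E) :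
    ∀ k : ℕ, (𝟙 E - q) ≫ geoSeq q k = 𝟙 E - pwSeq q k
  | 0 => by simp [geoSeq, pwSeq]
  | k + 1 => by
    have IH := geoSeq_left q k
    show (𝟙 E - q) ≫ (𝟙 E + q ≫ geoSeq q k) = 𝟙 E - q ≫ pwSeq q k
    have h1 : (𝟙 E - q) ≫ (q ≫ geoSeq q k) = q ≫ ((𝟙 E - q) ≫ geoSeq q k) := by
      rw [← Category.assoc, ← Category.assoc, Preadditive.sub_comp, Preadditive.comp_sub,
        Category.id_comp, Category.comp_id]
    rw [Preadditive.comp_add, Category.comp_id, h1, IH, Preadditive.comp_sub, Category.comp_id]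
    abel

lemma geoSeq_right {D : Type*} [Category D] [Preadditive D] {E : D} (q : E ⟶ E) :
    ∀ k : ℕ, geoSeq q k ≫ (𝟙 E - q) = 𝟙 E - pwSeq q k
  | 0 => by simp [geoSeq, pwSeq]
  | k + 1 => by
    have IH := geoSeq_right q k
    show (𝟙 E + q ≫ geoSeq q k) ≫ (𝟙 E - q) = 𝟙 E - q ≫ pwSeq q k
    rw [Preadditive.add_comp, Category.id_comp, Category.assoc, IH,
      Preadditive.comp_sub, Category.comp_id]
    abel

/-- Any module endomorphism killed by the "head" projection is nilpotent. -/
lemma pw_eq_zero_of_bar_zero {F : XMod X} {N : C} (u : N ⟶ F.carrier)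
    (pN : F.carrier ⟶ N) (pX : F.carrier ⟶ X.obj F.carrier)
    (hstrpN : F.str ≫ pN = 0) (htot : pN ≫ u + pX ≫ F.str = 𝟙 F.carrier)
    (mm : F ⟶ F) (hbar : u ≫ mm.hom ≫ pN = 0)
    {K : ℕ} (hK : IsZero ((fpow X K).obj F.carrier)) :
    pwSeq mm (K + 1) = 0 := by
  have hmmpN : mm.hom ≫ pN = 0 := by
    have h2 : F.str ≫ mm.hom ≫ pN = 0 := by
      rw [← Category.assoc, mm.comm, Category.assoc, hstrpN, comp_zero]
    calc mm.hom ≫ pN = (pN ≫ u + pX ≫ F.str) ≫ mm.hom ≫ pN := by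
          rw [htot, Category.id_comp]
      _ = pN ≫ (u ≫ mm.hom ≫ pN) + pX ≫ (F.str ≫ mm.hom ≫ pN) := by
          rw [Preadditive.add_comp, Category.assoc, Category.assoc]
      _ = 0 := by rw [hbar, h2, comp_zero, comp_zero, add_zero]
  have hfac : mm.hom = (mm.hom ≫ pX) ≫ F.str := by
    calc mm.hom = mm.hom ≫ (pN ≫ u + pX ≫ F.str) := by rw [htot, Category.comp_id]
      _ = (mm.hom ≫ pN) ≫ u + (mm.hom ≫ pX) ≫ F.str := by
          rw [Preadditive.comp_add, ← Category.assoc, ← Category.assoc]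
      _ = (mm.hom ≫ pX) ≫ F.str := by rw [hmmpN, zero_comp, zero_add]
  have claim : ∀ k : ℕ, ∃ (y : F.carrier ⟶ X.obj ((fpow X k).obj F.carrier))
      (z : X.obj ((fpow X k).obj F.carrier) ⟶ F.carrier), (pwSeq mm (k + 1)).hom = y ≫ z := by
    intro k
    induction k with
    | zero =>
      refine ⟨mm.hom ≫ pX, F.str, ?_⟩
      show (mm ≫ pwSeq mm 0).hom = _
      show (mm ≫ 𝟙 F).hom = _
      rw [XMod.comp_hom, XMod.id_hom, Category.comp_id]
      exact hfac
    | succ k IH =>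
      obtain ⟨y, z, hyz⟩ := IH
      refine ⟨(mm.hom ≫ pX) ≫ X.map y, X.map z ≫ F.str, ?_⟩
      show (mm ≫ pwSeq mm (k + 1)).hom = _
      rw [XMod.comp_hom]
      conv_lhs => rw [hfac]
      rw [Category.assoc (mm.hom ≫ pX) F.str ((pwSeq mm (k + 1)).hom),
        (pwSeq mm (k + 1)).comm, hyz, X.map_comp]
      simp only [Category.assoc]
      rfl
  obtain ⟨y, z, hyz⟩ := claim K
  have hy : y = 0 := (isZero_X_obj hK).eq_of_tgt y 0
  apply XModHom.ext
  rw [hyz, hy, zero_comp, XMod.zero_hom]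

end MimoAux2

section PModSection
set_option linter.unusedSectionVars false

variable (X) in
/-- The concrete model of the pushout: carrier `FJ ⊞ M` with twisted structure map. -/
noncomputable abbrev PMod (FJ M : XMod X) {J : C} (uJ : J ⟶ FJ.carrier)
    (e : X.obj M.carrier ⟶ J) : XMod X :=
  ⟨FJ.carrier ⊞ M.carrier,
    X.map biprod.fst ≫ FJ.str ≫ biprod.inl
      + X.map biprod.snd ≫ e ≫ uJ ≫ biprod.inl
      + X.map biprod.snd ≫ M.str ≫ biprod.inr⟩

variable {FJ M : XMod X} {J : C} {uJ : J ⟶ FJ.carrier} {e : X.obj M.carrier ⟶ J}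

lemma PMod_inl_str :
    X.map biprod.inl ≫ (PMod X FJ M uJ e).str = FJ.str ≫ biprod.inl := by
  show X.map biprod.inl ≫ (X.map biprod.fst ≫ FJ.str ≫ biprod.inl
      + X.map biprod.snd ≫ e ≫ uJ ≫ biprod.inl
      + X.map biprod.snd ≫ M.str ≫ biprod.inr) = FJ.str ≫ biprod.inl
  simp only [Preadditive.comp_add, ← Category.assoc, ← X.map_comp]
  simp

lemma PMod_inr_str :
    X.map biprod.inr ≫ (PMod X FJ M uJ e).str
      = e ≫ uJ ≫ biprod.inl + M.str ≫ biprod.inr := by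
  show X.map biprod.inr ≫ (X.map biprod.fst ≫ FJ.str ≫ biprod.inl
      + X.map biprod.snd ≫ e ≫ uJ ≫ biprod.inl
      + X.map biprod.snd ≫ M.str ≫ biprod.inr) = _
  simp only [Preadditive.comp_add, ← Category.assoc, ← X.map_comp]
  simp

lemma PMod_str_fst :
    (PMod X FJ M uJ e).str ≫ biprod.fst
      = X.map biprod.fst ≫ FJ.str + X.map biprod.snd ≫ e ≫ uJ := by
  show (X.map biprod.fst ≫ FJ.str ≫ biprod.inl
      + X.map biprod.snd ≫ e ≫ uJ ≫ biprod.inl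
      + X.map biprod.snd ≫ M.str ≫ biprod.inr) ≫ biprod.fst = _
  simp [Preadditive.add_comp]

lemma PMod_str_snd :
    (PMod X FJ M uJ e).str ≫ biprod.snd = X.map biprod.snd ≫ M.str := by
  show (X.map biprod.fst ≫ FJ.str ≫ biprod.inl
      + X.map biprod.snd ≫ e ≫ uJ ≫ biprod.inl
      + X.map biprod.snd ≫ M.str ≫ biprod.inr) ≫ biprod.snd = _
  simp [Preadditive.add_comp]

/-- The left pushout inclusion, as a module map. -/
noncomputable def PModInl : FJ ⟶ PMod X FJ M uJ e :=
  ⟨biprod.inl, PMod_inl_str.symm⟩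

/-- The projection `p₀`, as a module map. -/
noncomputable def PModSnd : PMod X FJ M uJ e ⟶ M :=
  ⟨biprod.snd, PMod_str_snd⟩

end PModSection

section MoreAux
set_option linter.unusedSectionVars false

lemma Xbiprod_total {A B : C} :
    X.map (biprod.fst : A ⊞ B ⟶ A) ≫ X.map biprod.inl
      + X.map (biprod.snd : A ⊞ B ⟶ B) ≫ X.map biprod.inr = 𝟙 (X.obj (A ⊞ B)) := by
  rw [← X.map_comp, ← X.map_comp, ← X.map_add, biprod.total, X.map_id]

end MoreAux
set_option maxHeartbeats 1600000

/-- Let `C` be abelian with enough injectives and `X` exact, locally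
nilpotent and preserving injectives. For `M` in the Eilenberg–Moore category of the free
monad, if in the construction of `Mo M` the map `e : X(M) ⟶ J` restricts to an injective
envelope of `ker h_M` (a left minimal monomorphism into the injective `J`), then the
resulting map `p : Mimo M ⟶ M` is a minimal right `Mono(X)`-approximation: a right
approximation such that every endomorphism `φ` with `φ ≫ p = p` is an isomorphism. -/

theorem mimo_is_minimal_right_monoX_approximation
    [EnoughInjectives C]
    [PreservesFiniteLimits X] [PreservesFiniteColimits X]
    (hX : LocallyNilpotent X)
    (hXinj : ∀ I : C, Injective I → Injective (X.obj I))
    (M : XMod X) (J : C) (hJ : Injective J) (e : X.obj M.carrier ⟶ J)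
    (he : Mono (kernel.ι M.str ≫ e))
    (hemin : ∀ φ : J ⟶ J, (kernel.ι M.str ≫ e) ≫ φ = kernel.ι M.str ≫ e → IsIso φ)
    (FM FXM FJ : XMod X)
    (hFM : IsFreeXModOn X FM M.carrier) (hFXM : IsFreeXModOn X FXM (X.obj M.carrier))
    (hFJ : IsFreeXModOn X FJ J)
    (d : FXM ⟶ FM) (hd : hFXM.unit ≫ d.hom = X.map hFM.unit ≫ FM.str - M.str ≫ hFM.unit)
    (fe : FXM ⟶ FJ) (hfe : hFXM.unit ≫ fe.hom = e ≫ hFJ.unit)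
    (ε : FM ⟶ M) (hε : hFM.unit ≫ ε.hom = 𝟙 M.carrier)
    (Mo : XMod X) (s : FJ ⟶ Mo) (r : FM ⟶ Mo) (hpo : IsPushout fe d s r)
    (p : Mo ⟶ M) (hp1 : r ≫ p = ε) (hp2 : s ≫ p = 0) :
    (Mono Mo.str ∧
      ∀ (N : XMod X), Mono N.str → ∀ f : N ⟶ M, ∃ f' : N ⟶ Mo, f' ≫ p = f) ∧
      ∀ φ : Mo ⟶ Mo, φ ≫ p = p → IsIso φ := by
  classical
  obtain ⟨pN, pX, rel1, rel2, rel3, rel4, rel5⟩ := hFJ.splitting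
  have hXuF : X.map hFM.unit ≫ FM.str = hFXM.unit ≫ d.hom + M.str ≫ hFM.unit := by
    rw [hd, sub_add_cancel]
  have hs₀hom : (PModInl : FJ ⟶ PMod X FJ M hFJ.unit e).hom = biprod.inl := rfl
  have hp₀hom : (PModSnd : PMod X FJ M hFJ.unit e ⟶ M).hom = biprod.snd := rfl
  have hr₀ : hFM.unit ≫ (hFM.lift (PMod X FJ M hFJ.unit e) biprod.inr).hom = biprod.inr :=
    hFM.fac _ _
  have key_r : X.map hFM.unit ≫ FM.str ≫ (hFM.lift (PMod X FJ M hFJ.unit e) biprod.inr).hom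
      = e ≫ hFJ.unit ≫ biprod.inl + M.str ≫ biprod.inr := by
    rw [(hFM.lift (PMod X FJ M hFJ.unit e) biprod.inr).comm, ← Category.assoc, ← X.map_comp,
      hr₀, PMod_inr_str]
  -- the square commutes
  have sq : fe ≫ (PModInl : FJ ⟶ PMod X FJ M hFJ.unit e)
      = d ≫ hFM.lift (PMod X FJ M hFJ.unit e) biprod.inr := by
    apply hFXM.hom_ext
    rw [XMod.comp_hom, XMod.comp_hom, hs₀hom]
    conv_lhs => rw [← Category.assoc, hfe, Category.assoc]
    conv_rhs => rw [← Category.assoc, hd, Preadditive.sub_comp, Category.assoc, key_r,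
      Category.assoc, hr₀]
    rw [add_sub_cancel_right]
  -- universal property data for the concrete square
  have hcommW : ∀ (T : XMod X) (a : FJ ⟶ T) (b : FM ⟶ T), fe ≫ a = d ≫ b →
      (PMod X FJ M hFJ.unit e).str ≫ biprod.desc a.hom (hFM.unit ≫ b.hom)
        = X.map (biprod.desc a.hom (hFM.unit ≫ b.hom)) ≫ T.str := by
    intro T a b hab
    have h5 : hFXM.unit ≫ d.hom ≫ b.hom = e ≫ hFJ.unit ≫ a.hom := by
      have := congrArg XModHom.hom hab.symm
      rw [XMod.comp_hom, XMod.comp_hom] at this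
      calc hFXM.unit ≫ d.hom ≫ b.hom = hFXM.unit ≫ fe.hom ≫ a.hom := by
            rw [this]
        _ = e ≫ hFJ.unit ≫ a.hom := by rw [← Category.assoc, hfe, Category.assoc]
    apply Xbiprod_hom_ext
    · conv_lhs => rw [← Category.assoc, PMod_inl_str, Category.assoc, biprod.inl_desc, a.comm]
      conv_rhs => rw [← Category.assoc, ← X.map_comp, biprod.inl_desc]
    · conv_lhs => rw [← Category.assoc, PMod_inr_str, Preadditive.add_comp, Category.assoc,
        Category.assoc, biprod.inl_desc, Category.assoc, biprod.inr_desc]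
      conv_rhs => rw [← Category.assoc, ← X.map_comp, biprod.inr_desc, X.map_comp,
        Category.assoc, ← b.comm, ← Category.assoc, hXuF, Preadditive.add_comp,
        Category.assoc, Category.assoc, h5]
  have hwinl : ∀ (T : XMod X) (a : FJ ⟶ T) (b : FM ⟶ T) (hab : fe ≫ a = d ≫ b),
      (PModInl : FJ ⟶ PMod X FJ M hFJ.unit e)
        ≫ (⟨biprod.desc a.hom (hFM.unit ≫ b.hom), hcommW T a b hab⟩ :
            PMod X FJ M hFJ.unit e ⟶ T) = a := by
    intro T a b hab
    apply XModHom.ext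
    rw [XMod.comp_hom, hs₀hom]
    exact biprod.inl_desc _ _
  have hwinr : ∀ (T : XMod X) (a : FJ ⟶ T) (b : FM ⟶ T) (hab : fe ≫ a = d ≫ b),
      hFM.lift (PMod X FJ M hFJ.unit e) biprod.inr
        ≫ (⟨biprod.desc a.hom (hFM.unit ≫ b.hom), hcommW T a b hab⟩ :
            PMod X FJ M hFJ.unit e ⟶ T) = b := by
    intro T a b hab
    apply hFM.hom_ext
    rw [XMod.comp_hom, ← Category.assoc, hr₀]
    exact biprod.inr_desc _ _
  have hwuniq : ∀ (T : XMod X) (a : FJ ⟶ T) (b : FM ⟶ T) (hab : fe ≫ a = d ≫ b)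
      (w' : PMod X FJ M hFJ.unit e ⟶ T),
      (PModInl : FJ ⟶ PMod X FJ M hFJ.unit e) ≫ w' = a →
      hFM.lift (PMod X FJ M hFJ.unit e) biprod.inr ≫ w' = b →
      w' = (⟨biprod.desc a.hom (hFM.unit ≫ b.hom), hcommW T a b hab⟩ :
            PMod X FJ M hFJ.unit e ⟶ T) := by
    intro T a b hab w' h1 h2
    apply XModHom.ext
    simp only [XModHom.mk_hom]
    apply biprod.hom_ext'
    · rw [biprod.inl_desc]
      have := congrArg XModHom.hom h1
      rw [XMod.comp_hom, hs₀hom] at this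
      exact this
    · rw [biprod.inr_desc]
      have := congrArg XModHom.hom h2
      rw [XMod.comp_hom] at this
      rw [← hr₀, Category.assoc, this]
  have hPP : IsPushout fe d (PModInl : FJ ⟶ PMod X FJ M hFJ.unit e)
      (hFM.lift (PMod X FJ M hFJ.unit e) biprod.inr) :=
    IsPushout.of_isColimit (PushoutCocone.IsColimit.mk sq
      (fun sc => ⟨biprod.desc sc.inl.hom (hFM.unit ≫ sc.inr.hom),
        hcommW sc.pt sc.inl sc.inr sc.condition⟩)
      (fun sc => hwinl sc.pt sc.inl sc.inr sc.condition)
      (fun sc => hwinr sc.pt sc.inl sc.inr sc.condition)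
      (fun sc w' h1 h2 => hwuniq sc.pt sc.inl sc.inr sc.condition w' h1 h2))
  -- comparison isomorphism
  set κ : Mo ⟶ PMod X FJ M hFJ.unit e := hpo.desc _ _ sq with hκdef
  set lam : PMod X FJ M hFJ.unit e ⟶ Mo := hPP.desc s r hpo.w with hlamdef
  have hsκ : s ≫ κ = PModInl := hpo.inl_desc _ _ sq
  have hrκ : r ≫ κ = hFM.lift (PMod X FJ M hFJ.unit e) biprod.inr := hpo.inr_desc _ _ sq
  have hslam : PModInl ≫ lam = s := hPP.inl_desc _ _ hpo.w
  have hrlam : hFM.lift (PMod X FJ M hFJ.unit e) biprod.inr ≫ lam = r := hPP.inr_desc _ _ hpo.w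
  have hκlam : κ ≫ lam = 𝟙 Mo := by
    apply hpo.hom_ext
    · rw [← Category.assoc, hsκ, hslam, Category.comp_id]
    · rw [← Category.assoc, hrκ, hrlam, Category.comp_id]
  have lamκ : lam ≫ κ = 𝟙 (PMod X FJ M hFJ.unit e) := by
    apply hPP.hom_ext
    · rw [← Category.assoc, hslam, hsκ, Category.comp_id]
    · rw [← Category.assoc, hrlam, hrκ, Category.comp_id]
  have hs₀p₀ : (PModInl : FJ ⟶ PMod X FJ M hFJ.unit e) ≫ PModSnd = 0 := by
    apply XModHom.ext
    rw [XMod.comp_hom, hs₀hom, hp₀hom, XMod.zero_hom, biprod.inl_snd]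
  have hr₀p₀ : hFM.lift (PMod X FJ M hFJ.unit e) biprod.inr ≫ PModSnd = ε := by
    apply hFM.hom_ext
    rw [XMod.comp_hom, ← Category.assoc, hr₀, hp₀hom, hε, biprod.inr_snd]
  have hlamp : lam ≫ p = PModSnd := by
    apply hPP.hom_ext
    · rw [← Category.assoc, hslam, hp2, hs₀p₀]
    · rw [← Category.assoc, hrlam, hp1, hr₀p₀]
  have hκhom2 : κ.hom ≫ lam.hom = 𝟙 Mo.carrier := by
    have := congrArg XModHom.hom hκlam
    rwa [XMod.comp_hom, XMod.id_hom] at this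
  have hκhom3 : lam.hom ≫ κ.hom = 𝟙 (PMod X FJ M hFJ.unit e).carrier := by
    have := congrArg XModHom.hom lamκ
    rwa [XMod.comp_hom, XMod.id_hom] at this
  have hκhomiso : IsIso κ.hom := ⟨lam.hom, hκhom2, hκhom3⟩
  -- mono of the concrete structure map
  haveI hemono := he
  have hmonoP : Mono (PMod X FJ M hFJ.unit e).str := by
    apply Preadditive.mono_of_cancel_zero
    intro T g hg
    have e1 : (g ≫ X.map biprod.fst) ≫ FJ.str
        + ((g ≫ X.map biprod.snd) ≫ e) ≫ hFJ.unit = 0 := by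
      have : g ≫ (PMod X FJ M hFJ.unit e).str ≫ biprod.fst = 0 := by
        rw [← Category.assoc, hg, zero_comp]
      rw [PMod_str_fst, Preadditive.comp_add] at this
      calc (g ≫ X.map biprod.fst) ≫ FJ.str + ((g ≫ X.map biprod.snd) ≫ e) ≫ hFJ.unit
          = g ≫ X.map biprod.fst ≫ FJ.str + g ≫ X.map biprod.snd ≫ e ≫ hFJ.unit := by
            rw [Category.assoc, Category.assoc, Category.assoc]
        _ = 0 := this
    have e2 : (g ≫ X.map biprod.snd) ≫ M.str = 0 := by
      have : g ≫ (PMod X FJ M hFJ.unit e).str ≫ biprod.snd = 0 := by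
        rw [← Category.assoc, hg, zero_comp]
      rw [PMod_str_snd, ← Category.assoc] at this
      exact this
    have hk := kernel.lift_ι M.str (g ≫ X.map biprod.snd) e2
    have ht₂e : (g ≫ X.map biprod.snd) ≫ e = 0 := by
      have := congrArg (fun q => q ≫ pN) e1
      simp only [Preadditive.add_comp, zero_comp, Category.assoc, rel3, rel1, comp_zero,
        Category.comp_id, zero_add] at this
      rw [Category.assoc]
      exact this
    have hk0 : kernel.lift M.str (g ≫ X.map biprod.snd) e2 = 0 := by
      apply zero_of_comp_mono (kernel.ι M.str ≫ e)
      rw [← Category.assoc, hk, ht₂e]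
    have ht₂ : g ≫ X.map biprod.snd = 0 := by rw [← hk, hk0, zero_comp]
    have ht₁ : g ≫ X.map biprod.fst = 0 := by
      have h6 : (g ≫ X.map biprod.fst) ≫ FJ.str = 0 := by
        rw [ht₂, zero_comp, zero_comp, add_zero] at e1
        exact e1
      rw [← Category.comp_id (g ≫ X.map biprod.fst), ← rel4, ← Category.assoc, h6, zero_comp]
    calc g = g ≫ 𝟙 (X.obj (FJ.carrier ⊞ M.carrier)) := (Category.comp_id g).symm
      _ = (g ≫ X.map biprod.fst) ≫ X.map biprod.inl
          + (g ≫ X.map biprod.snd) ≫ X.map biprod.inr := by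
          rw [← Xbiprod_total, Preadditive.comp_add, Category.assoc, Category.assoc]
      _ = 0 := by rw [ht₁, ht₂, zero_comp, zero_comp, add_zero]
  have goal1 : Mono Mo.str := by
    haveI := hκhomiso
    haveI : IsIso (X.map κ.hom) := inferInstance
    have : Mo.str = X.map κ.hom ≫ (PMod X FJ M hFJ.unit e).str ≫ inv κ.hom := by
      rw [← Category.assoc, ← κ.comm, Category.assoc, IsIso.hom_inv_id, Category.comp_id]
    rw [this]
    haveI := hmonoP
    apply mono_comp
  refine ⟨⟨goal1, ?_⟩, ?_⟩
  · -- right approximation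
    intro N hNmono f
    haveI : Mono N.str := hNmono
    obtain ⟨K, hK⟩ := hX J
    have hγK : gammaSeq N.str hJ hXinj (X.map f.hom ≫ e) K = 0 := hK.eq_of_tgt _ _
    have hGstep : GSeq N.str hJ hXinj (X.map f.hom ≫ e) hFJ.unit FJ.str (K + 1)
        = GSeq N.str hJ hXinj (X.map f.hom ≫ e) hFJ.unit FJ.str K := by
      show GSeq N.str hJ hXinj (X.map f.hom ≫ e) hFJ.unit FJ.str K
          + gammaSeq N.str hJ hXinj (X.map f.hom ≫ e) K ≫ insSeq hFJ.unit FJ.str K = _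
      rw [hγK, zero_comp, add_zero]
    have hgE : N.str ≫ GSeq N.str hJ hXinj (X.map f.hom ≫ e) hFJ.unit FJ.str (K + 1)
        = (X.map f.hom ≫ e) ≫ hFJ.unit
          + X.map (GSeq N.str hJ hXinj (X.map f.hom ≫ e) hFJ.unit FJ.str (K + 1)) ≫ FJ.str := by
      conv_rhs => rw [hGstep]
      exact GSeq_eq N.str hJ hXinj (X.map f.hom ≫ e) hFJ.unit FJ.str K
    have hfcomm : N.str ≫ biprod.lift
          (GSeq N.str hJ hXinj (X.map f.hom ≫ e) hFJ.unit FJ.str (K + 1)) f.hom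
        = X.map (biprod.lift
            (GSeq N.str hJ hXinj (X.map f.hom ≫ e) hFJ.unit FJ.str (K + 1)) f.hom)
          ≫ (PMod X FJ M hFJ.unit e).str := by
      apply biprod.hom_ext
      · simp only [Category.assoc, biprod.lift_fst]
        rw [hgE, PMod_str_fst]
        simp only [Preadditive.comp_add, ← Category.assoc, ← X.map_comp, biprod.lift_fst,
          biprod.lift_snd]
        exact add_comm _ _
      · simp only [Category.assoc, biprod.lift_snd]
        rw [PMod_str_snd, ← Category.assoc, ← X.map_comp, biprod.lift_snd, f.comm]
    refine ⟨(⟨biprod.lift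
        (GSeq N.str hJ hXinj (X.map f.hom ≫ e) hFJ.unit FJ.str (K + 1)) f.hom, hfcomm⟩ :
        N ⟶ PMod X FJ M hFJ.unit e) ≫ lam, ?_⟩
    rw [Category.assoc, hlamp]
    apply XModHom.ext
    rw [XMod.comp_hom, XModHom.mk_hom, hp₀hom]
    exact biprod.lift_snd _ _
  · -- right minimality
    intro φ hφ
    set ψh : (PMod X FJ M hFJ.unit e).carrier ⟶ (PMod X FJ M hFJ.unit e).carrier
      := (lam ≫ φ ≫ κ).hom with hψh
    have hκp : κ ≫ PModSnd = p := by
      rw [← hlamp, ← Category.assoc, hκlam, Category.id_comp]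
    have hψp : (lam ≫ φ ≫ κ) ≫ PModSnd = PModSnd := by
      rw [Category.assoc, Category.assoc, hκp, hφ, hlamp]
    have hψsnd : ψh ≫ biprod.snd = biprod.snd := by
      have := congrArg XModHom.hom hψp
      rw [XMod.comp_hom, hp₀hom] at this
      rw [hψh]
      exact this
    set a : FJ.carrier ⟶ FJ.carrier := biprod.inl ≫ ψh ≫ biprod.fst with ha
    set b : M.carrier ⟶ FJ.carrier := biprod.inr ≫ ψh ≫ biprod.fst with hb
    have hψinl : biprod.inl ≫ ψh = a ≫ biprod.inl := by
      apply biprod.hom_ext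
      · simp only [Category.assoc, biprod.inl_fst, Category.comp_id, ha]
      · simp only [Category.assoc, hψsnd, biprod.inl_snd, comp_zero]
    have hψinr : biprod.inr ≫ ψh = b ≫ biprod.inl + biprod.inr := by
      apply biprod.hom_ext
      · simp only [Category.assoc, Preadditive.add_comp, biprod.inl_fst, biprod.inr_fst,
          Category.comp_id, add_zero, hb]
      · simp only [Category.assoc, hψsnd, Preadditive.add_comp, biprod.inl_snd,
          biprod.inr_snd, comp_zero, zero_add]
    have hψcomm : (PMod X FJ M hFJ.unit e).str ≫ ψh
        = X.map ψh ≫ (PMod X FJ M hFJ.unit e).str := by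
      rw [hψh]
      exact (lam ≫ φ ≫ κ).comm
    have hacomm : FJ.str ≫ a = X.map a ≫ FJ.str := by
      have h7 : FJ.str ≫ a ≫ (biprod.inl : FJ.carrier ⟶ FJ.carrier ⊞ M.carrier)
          = X.map a ≫ FJ.str ≫ biprod.inl := by
        calc FJ.str ≫ a ≫ (biprod.inl : FJ.carrier ⟶ FJ.carrier ⊞ M.carrier)
            = X.map biprod.inl ≫ (PMod X FJ M hFJ.unit e).str ≫ ψh := by
              conv_rhs => rw [← Category.assoc, PMod_inl_str, Category.assoc, hψinl]
          _ = X.map (a ≫ biprod.inl) ≫ (PMod X FJ M hFJ.unit e).str := by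
              conv_lhs => rw [hψcomm, ← Category.assoc, ← X.map_comp, hψinl]
          _ = X.map a ≫ FJ.str ≫ biprod.inl := by
              rw [X.map_comp, Category.assoc, PMod_inl_str]
      have := congrArg (fun q => q ≫ biprod.fst) h7
      simp only [Category.assoc, biprod.inl_fst, Category.comp_id] at this
      exact this
    have h8 : e ≫ hFJ.unit ≫ a + M.str ≫ b = X.map b ≫ FJ.str + e ≫ hFJ.unit := by
      have h9 : X.map biprod.inr ≫ (PMod X FJ M hFJ.unit e).str ≫ ψh
          = X.map biprod.inr ≫ X.map ψh ≫ (PMod X FJ M hFJ.unit e).str := by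
        rw [hψcomm]
      have hL : X.map biprod.inr ≫ (PMod X FJ M hFJ.unit e).str ≫ ψh
          = e ≫ hFJ.unit ≫ a ≫ biprod.inl + M.str ≫ (b ≫ biprod.inl + biprod.inr) := by
        rw [← Category.assoc, PMod_inr_str, Preadditive.add_comp]
        simp only [Category.assoc]
        rw [hψinl, hψinr]
      have hR : X.map biprod.inr ≫ X.map ψh ≫ (PMod X FJ M hFJ.unit e).str
          = X.map b ≫ FJ.str ≫ biprod.inl
            + (e ≫ hFJ.unit ≫ biprod.inl + M.str ≫ biprod.inr) := by
        rw [← Category.assoc, ← X.map_comp, hψinr, X.map_add, X.map_comp,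
          Preadditive.add_comp, Category.assoc, PMod_inl_str, PMod_inr_str]
      have h10 := hL.symm.trans (h9.trans hR)
      have := congrArg (fun q => q ≫ biprod.fst) h10
      simp only [Category.assoc, Preadditive.add_comp, Preadditive.comp_add, biprod.inl_fst,
        biprod.inr_fst, Category.comp_id, comp_zero, add_zero] at this
      exact this
    have hbar_eq : e ≫ hFJ.unit ≫ a ≫ pN + M.str ≫ b ≫ pN = e := by
      have := congrArg (fun q => q ≫ pN) h8
      simp only [Category.assoc, Preadditive.add_comp, rel3, comp_zero, zero_add, rel1,
        Category.comp_id] at this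
      exact this
    have hbariso : IsIso (hFJ.unit ≫ a ≫ pN) := by
      apply hemin
      have := congrArg (fun q => kernel.ι M.str ≫ q) hbar_eq
      simp only [Preadditive.comp_add] at this
      rw [← Category.assoc (kernel.ι M.str) M.str, kernel.condition, zero_comp, add_zero]
        at this
      rw [Category.assoc]
      exact this
    set amod : FJ ⟶ FJ := ⟨a, hacomm⟩ with hamoddef
    have hamodhom : amod.hom = a := rfl
    have hstar : ∀ mm : FJ ⟶ FJ, mm.hom ≫ pN = pN ≫ hFJ.unit ≫ mm.hom ≫ pN := by
      intro mm
      have h1 : pX ≫ FJ.str ≫ mm.hom ≫ pN = 0 := by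
        rw [← Category.assoc FJ.str, mm.comm, Category.assoc, rel3, comp_zero, comp_zero]
      have h2 : (pN ≫ hFJ.unit + pX ≫ FJ.str) ≫ mm.hom ≫ pN = mm.hom ≫ pN := by
        rw [rel5, Category.id_comp]
      conv_lhs => rw [← h2, Preadditive.add_comp, Category.assoc, Category.assoc]
      rw [h1, add_zero]
    have hbarcomp : ∀ x y : FJ ⟶ FJ, hFJ.unit ≫ (x ≫ y).hom ≫ pN
        = (hFJ.unit ≫ x.hom ≫ pN) ≫ (hFJ.unit ≫ y.hom ≫ pN) := by
      intro x y
      conv_lhs => rw [XMod.comp_hom, Category.assoc, hstar y]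
      simp only [Category.assoc]
    have hfacL : ∀ β : J ⟶ J, hFJ.unit ≫ (hFJ.lift FJ (β ≫ hFJ.unit)).hom = β ≫ hFJ.unit :=
      fun β => hFJ.fac _ _
    have hLcomp : ∀ β₁ β₂ : J ⟶ J, hFJ.lift FJ (β₁ ≫ hFJ.unit) ≫ hFJ.lift FJ (β₂ ≫ hFJ.unit)
        = hFJ.lift FJ ((β₁ ≫ β₂) ≫ hFJ.unit) := by
      intro β₁ β₂
      apply hFJ.hom_ext
      rw [XMod.comp_hom, ← Category.assoc, hfacL β₁, Category.assoc, hfacL β₂, hfacL (β₁ ≫ β₂)]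
      simp only [Category.assoc]
    have hLid : hFJ.lift FJ (𝟙 J ≫ hFJ.unit) = 𝟙 FJ := by
      apply hFJ.hom_ext
      rw [hfacL (𝟙 J), XMod.id_hom, Category.id_comp, Category.comp_id]
    haveI := hbariso
    set a'm : FJ ⟶ FJ := hFJ.lift FJ ((hFJ.unit ≫ a ≫ pN) ≫ hFJ.unit) with ha'm
    have ha'iso : IsIso a'm := by
      refine ⟨hFJ.lift FJ (inv (hFJ.unit ≫ a ≫ pN) ≫ hFJ.unit), ?_, ?_⟩
      · rw [ha'm, hLcomp, IsIso.hom_inv_id]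
        exact hLid
      · rw [ha'm, hLcomp, IsIso.inv_hom_id]
        exact hLid
    have hbara' : hFJ.unit ≫ a'm.hom ≫ pN = hFJ.unit ≫ a ≫ pN := by
      rw [ha'm, ← Category.assoc, hfacL, Category.assoc, Category.assoc, rel1,
        Category.comp_id]
    haveI := ha'iso
    set mmod : FJ ⟶ FJ := inv a'm ≫ (amod - a'm) with hmmod
    have hbarsub : hFJ.unit ≫ (amod - a'm).hom ≫ pN = 0 := by
      rw [XMod.sub_hom, XModHom.mk_hom, Preadditive.sub_comp, Preadditive.comp_sub, hbara',
        sub_self]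
    have hbarm : hFJ.unit ≫ mmod.hom ≫ pN = 0 := by
      rw [hmmod, hbarcomp, hbarsub, comp_zero]
    have hbarq : hFJ.unit ≫ (-mmod).hom ≫ pN = 0 := by
      rw [XMod.neg_hom, Preadditive.neg_comp, Preadditive.comp_neg, hbarm, neg_zero]
    obtain ⟨K2, hK2⟩ := hX FJ.carrier
    have hpwq : pwSeq (-mmod) (K2 + 1) = 0 :=
      pw_eq_zero_of_bar_zero hFJ.unit pN pX rel3 rel5 (-mmod) hbarq hK2
    have hiso1 : IsIso (𝟙 FJ - -mmod) :=
      ⟨geoSeq (-mmod) (K2 + 1), by rw [geoSeq_left, hpwq, sub_zero],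
        by rw [geoSeq_right, hpwq, sub_zero]⟩
    have hamod_eq : amod = a'm ≫ (𝟙 FJ + mmod) := by
      rw [Preadditive.comp_add, Category.comp_id, hmmod, ← Category.assoc,
        IsIso.hom_inv_id a'm, Category.id_comp]
      abel
    have hamodiso : IsIso amod := by
      rw [hamod_eq]
      haveI : IsIso (𝟙 FJ + mmod) := by rw [← sub_neg_eq_add]; exact hiso1
      infer_instance
    have haiso : IsIso a := by
      haveI := hamodiso
      have := XMod.isIso_hom amod
      rwa [hamodhom] at this
    haveI := haiso
    have hψdesc : ψh = biprod.desc (a ≫ biprod.inl) (b ≫ biprod.inl + biprod.inr) := by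
      apply biprod.hom_ext'
      · rw [biprod.inl_desc, hψinl]
      · rw [biprod.inr_desc, hψinr]
    have hid : 𝟙 ((PMod X FJ M hFJ.unit e).carrier) = 𝟙 (FJ.carrier ⊞ M.carrier) := rfl
    have hψiso : IsIso ψh := by
      refine ⟨biprod.desc (inv a ≫ biprod.inl) (-(b ≫ inv a) ≫ biprod.inl + biprod.inr),
        ?_, ?_⟩
      · rw [hψdesc, hid]
        apply biprod.hom_ext'
        · simp only [← Category.assoc, biprod.inl_desc, Category.id_comp]
          simp only [Category.comp_id, Category.assoc, biprod.inl_desc, IsIso.hom_inv_id_assoc]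
        · simp only [← Category.assoc, biprod.inr_desc, Category.id_comp]
          simp only [Category.comp_id, Preadditive.add_comp, Category.assoc, biprod.inl_desc, biprod.inr_desc,
            Preadditive.neg_comp, IsIso.hom_inv_id_assoc]
          abel
      · rw [hψdesc, hid]
        apply biprod.hom_ext'
        · simp only [← Category.assoc, biprod.inl_desc, Category.id_comp]
          simp only [Category.comp_id, Category.assoc, biprod.inl_desc, IsIso.inv_hom_id_assoc]
        · simp only [← Category.assoc, biprod.inr_desc, Category.id_comp]
          simp only [Category.comp_id, Preadditive.add_comp, Category.assoc, biprod.inl_desc, biprod.inr_desc,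
            Preadditive.neg_comp, IsIso.inv_hom_id_assoc]
          abel
    have hψmod : IsIso (lam ≫ φ ≫ κ) := by
      apply XMod.isIso_of_hom
      rw [hψh] at hψiso
      exact hψiso
    have hφeq : φ = κ ≫ (lam ≫ φ ≫ κ) ≫ lam := by
      calc φ = 𝟙 Mo ≫ φ ≫ 𝟙 Mo := by rw [Category.id_comp, Category.comp_id]
        _ = (κ ≫ lam) ≫ φ ≫ κ ≫ lam := by rw [hκlam]
        _ = κ ≫ (lam ≫ φ ≫ κ) ≫ lam := by simp only [Category.assoc]
    rw [hφeq]
    haveI := hψmod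
    haveI : IsIso κ := ⟨lam, hκlam, lamκ⟩
    haveI : IsIso lam := ⟨κ, lamκ, hκlam⟩
    infer_instance
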